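/- The canonical ring homomorphism φ : A → Â is injective if and only if for every index j the restriction of φ to 𝔞_j, viewed as a map 𝔞_j → 𝔞̂_j, is injective; and φ is surjective if and only if for every index j the map 𝔞_j → 𝔞̂_j is surjective, i.e. every element of 𝔞̂_j is the image under φ of an element of 𝔞_j. -/

import Mathlib

/-- Let `(𝔞 i)` be a decreasing chain of ideals of `A`, `Â` the completion of `A` along this
chain (compatible families in `∏ i, A ⧸ 𝔞 i`) and `φ : A → Â` the canonical map. Then `φ` is
injective iff for every `j` the restriction `𝔞 j → 𝔞̂ j` of `φ` is injective, and `φ` is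
surjective (onto `Â`) iff for every `j` every element of `𝔞̂ j = ker (pr j)` is the image
under `φ` of an element of `𝔞 j`. -/
theorem stmt0 (A : Type*) [CommRing A] (𝔞 : ℕ → Ideal A) (h𝔞 : Antitone 𝔞)
    (Ahat : Set (Π i : ℕ, A ⧸ 𝔞 i))
    (hAhat : Ahat = {x | ∀ (i j : ℕ) (hij : i ≤ j),
      Ideal.Quotient.factor (S := 𝔞 j) (T := 𝔞 i) (h𝔞 hij) (x j) = x i})
    (φ : A → Π i : ℕ, A ⧸ 𝔞 i)
    (hφ : ∀ (a : A) (i : ℕ), φ a i = Ideal.Quotient.mk (𝔞 i) a) :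
    (Function.Injective φ ↔
      ∀ j : ℕ, ∀ a ∈ 𝔞 j, ∀ b ∈ 𝔞 j, φ a = φ b → a = b) ∧
    ((∀ x ∈ Ahat, ∃ a : A, φ a = x) ↔
      ∀ j : ℕ, ∀ x ∈ Ahat, x j = 0 → ∃ a ∈ 𝔞 j, φ a = x) := by
  constructor
  · constructor
    · intro h j a _ b _ hab
      exact h hab
    · intro h a b hab
      have hd : ∀ i, a - b ∈ 𝔞 i := by
        intro i
        have := congrFun hab i
        rw [hφ, hφ] at this
        exact Ideal.Quotient.eq.mp this
      have h0 : φ (a - b) = φ 0 := by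
        funext i
        rw [hφ, hφ, map_zero, Ideal.Quotient.eq_zero_iff_mem]
        exact hd i
      have := h 0 (a - b) (hd 0) 0 (𝔞 0).zero_mem h0
      exact sub_eq_zero.mp this
  · constructor
    · intro h j x hx hxj
      obtain ⟨a, ha⟩ := h x hx
      refine ⟨a, ?_, ha⟩
      rw [← Ideal.Quotient.eq_zero_iff_mem, ← hφ, ha, hxj]
    · intro h x hx
      obtain ⟨b, hb⟩ := Ideal.Quotient.mk_surjective (x 0)
      have hmem : (fun i => x i - φ b i) ∈ Ahat := by
        rw [hAhat] at hx ⊢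
        intro i j hij
        simp only [map_sub, hx i j hij, hφ, Ideal.Quotient.factor_mk]
      have hz : (fun i => x i - φ b i) 0 = 0 := by
        simp [hφ, hb]
      obtain ⟨a, _, ha⟩ := h 0 _ hmem hz
      refine ⟨a + b, ?_⟩
      funext i
      have := congrFun ha i
      simp only [hφ] at this ⊢
      rw [map_add, this]
      ring
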